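/- For n ≥ k ≥ 1, if F is a family of subsets of an n-element set X such that every member of F has size at most n−k and no two nonempty members of F are disjoint, then |F| ≤ 2^{n-1} − Σ_{j=1}^{k-1} C(n−1, j). -/

import Mathlib

open Finset

/-- A `d`-simplex: `d+1` sets whose total intersection is empty but such that
the intersection of any `d` of them is nonempty. -/
def IsSimplex {α : Type*} [DecidableEq α] (d : ℕ) (A : Fin (d + 1) → Finset α) : Prop :=
  (⋂ i, (A i : Set α)) = ∅ ∧
    ∀ j : Fin (d + 1), (⋂ i, ⋂ (_ : i ≠ j), (A i : Set α)).Nonempty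

/-- A family is `d`-simplex-free if it contains no `d`-simplex. -/
def SimplexFree {α : Type*} [DecidableEq α] (d : ℕ) (F : Finset (Finset α)) : Prop :=
  ¬ ∃ A : Fin (d + 1) → Finset α, (∀ i, A i ∈ F) ∧ IsSimplex d A
lemma inter_of_free {α : Type*} [DecidableEq α] {F : Finset (Finset α)} (hfree : SimplexFree 1 F) :
    ∀ A ∈ F, ∀ B ∈ F, A.Nonempty → B.Nonempty → ¬ Disjoint A B := by
  intro A hA B hB hAne hBne hd
  apply hfree
  refine ⟨![A, B], fun i => by fin_cases i <;> simpa, ?_, fun j => ?_⟩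
  · ext x
    simp only [Set.mem_iInter, Set.mem_empty_iff_false, iff_false]
    intro h
    have h0 := h 0
    have h1 := h 1
    simp at h0 h1
    exact (Finset.disjoint_left.mp hd h0) h1
  · fin_cases j
    · obtain ⟨x, hx⟩ := hBne
      refine ⟨x, ?_⟩
      simp only [Set.mem_iInter]
      intro i hi
      fin_cases i
      · simp at hi
      · simpa using hx
    · obtain ⟨x, hx⟩ := hAne
      refine ⟨x, ?_⟩
      simp only [Set.mem_iInter]
      intro i hi
      fin_cases i
      · simpa using hx
      · simp at hi

lemma ekr_ground {α : Type*} [DecidableEq α] {n r : ℕ} (X : Finset α) (hX : X.card = n)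
    (hr : 2 * r ≤ n) (𝒜 : Finset (Finset α)) (hsub : ∀ A ∈ 𝒜, A ⊆ X)
    (hsized : ∀ A ∈ 𝒜, A.card = r)
    (hint : ∀ A ∈ 𝒜, ∀ B ∈ 𝒜, ¬ Disjoint A B) :
    𝒜.card ≤ (n - 1).choose (r - 1) := by
  classical
  let j : Fin n → α := fun i => (X.equivFin.symm (Fin.cast hX.symm i) : α)
  have hj_inj : Function.Injective j := by
    intro a b hab
    have := Subtype.val_injective hab
    have := X.equivFin.symm.injective this
    exact Fin.cast_injective _ this
  have hsurj : ∀ x ∈ X, ∃ i, j i = x := by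
    intro x hx
    refine ⟨Fin.cast hX (X.equivFin ⟨x, hx⟩), ?_⟩
    simp [j]
  let Φ : Finset α → Finset (Fin n) := fun A => A.preimage j hj_inj.injOn
  have himg : ∀ A ∈ 𝒜, (Φ A).image j = A := by
    intro A hA
    ext x
    simp only [mem_image, Φ, mem_preimage]
    constructor
    · rintro ⟨i, hi, rfl⟩; exact hi
    · intro hx
      obtain ⟨i, rfl⟩ := hsurj x (hsub A hA hx)
      exact ⟨i, hx, rfl⟩
  have hcardΦ : ∀ A ∈ 𝒜, (Φ A).card = A.card := by
    intro A hA
    conv_rhs => rw [← himg A hA]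
    exact (card_image_of_injective _ hj_inj).symm
  have hinjΦ : Set.InjOn Φ 𝒜 := by
    intro A hA B hB h
    rw [← himg A hA, ← himg B hB, h]
  have hEKR := Finset.erdos_ko_rado (𝒜 := 𝒜.image Φ) (r := r) ?_ ?_ ?_
  · rwa [card_image_of_injOn hinjΦ] at hEKR
  · rintro S hS T hT hST
    simp only [coe_image, Set.mem_image, mem_coe] at hS hT
    obtain ⟨A, hA, rfl⟩ := hS
    obtain ⟨B, hB, rfl⟩ := hT
    refine hint A hA B hB (disjoint_left.mpr ?_)
    intro x hxA hxB
    obtain ⟨i, rfl⟩ := hsurj x (hsub A hA hxA)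
    exact disjoint_left.mp hST (by simpa [Φ] using hxA) (by simpa [Φ] using hxB)
  · rintro S hS
    simp only [coe_image, Set.mem_image, mem_coe] at hS
    obtain ⟨A, hA, rfl⟩ := hS
    rw [hcardΦ A hA]
    exact hsized A hA
  · omega

lemma pascal_split {n c : ℕ} (hc : 1 ≤ c) (hn : 1 ≤ n) :
    n.choose c = (n - 1).choose (c - 1) + (n - 1).choose c := by
  obtain ⟨c', rfl⟩ : ∃ c', c = c' + 1 := ⟨c - 1, by omega⟩
  obtain ⟨n', rfl⟩ : ∃ n', n = n' + 1 := ⟨n - 1, by omega⟩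
  simp [Nat.choose_succ_succ]

lemma final_arith (n k : ℕ) (hk : 1 ≤ k) (hkn : k ≤ n) :
    1 + ∑ c ∈ Ico 1 (n - k + 1), (n - 1).choose (c - 1)
      + ∑ j ∈ Icc 1 (k - 1), (n - 1).choose j = 2 ^ (n - 1) := by
  have h1 : ∑ c ∈ Ico 1 (n - k + 1), (n - 1).choose (c - 1)
      = ∑ d ∈ range (n - k), (n - 1).choose d := by
    rw [Finset.sum_Ico_eq_sum_range]
    simp
  have h2 : ∑ j ∈ Icc 1 (k - 1), (n - 1).choose j
      = ∑ d ∈ Ico (n - k) (n - 1), (n - 1).choose d := by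
    refine Finset.sum_nbij' (fun j => n - 1 - j) (fun d => n - 1 - d) ?_ ?_ ?_ ?_ ?_
    · intro a ha
      simp only [mem_Icc] at ha
      simp only [mem_Ico]
      omega
    · intro a ha
      simp only [mem_Ico] at ha
      simp only [mem_Icc]
      omega
    · intro a ha
      simp only [mem_Icc] at ha
      omega
    · intro a ha
      simp only [mem_Ico] at ha
      omega
    · intro a ha
      simp only [mem_Icc] at ha
      exact (Nat.choose_symm (by omega)).symm
  rw [h1, h2, range_eq_Ico]
  have h4 : ∑ d ∈ Ico 0 (n - k), (n - 1).choose d + ∑ d ∈ Ico (n - k) (n - 1), (n - 1).choose d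
      = ∑ d ∈ Ico 0 (n - 1), (n - 1).choose d :=
    Finset.sum_Ico_consecutive _ (Nat.zero_le _) (by omega)
  have h3 : ∑ d ∈ Ico 0 (n - 1), (n - 1).choose d + (n - 1).choose (n - 1) = 2 ^ (n - 1) := by
    have := Nat.sum_range_choose (n - 1)
    rw [Finset.sum_range_succ] at this
    rwa [range_eq_Ico] at this
  simp only [Nat.choose_self] at h3
  omega

theorem stmt1 {α : Type*} [DecidableEq α] (n k : ℕ) (hk : 1 ≤ k) (hkn : k ≤ n)
    (X : Finset α) (hX : X.card = n) (F : Finset (Finset α)) (hF : F ⊆ X.powerset)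
    (hsize : ∀ A ∈ F, A.card ≤ n - k) (hfree : SimplexFree 1 F) :
    F.card ≤ 2 ^ (n - 1) - ∑ j ∈ Finset.Icc 1 (k - 1), (n - 1).choose j := by
  classical
  have hint := inter_of_free hfree
  have hsubX : ∀ A ∈ F, A ⊆ X := fun A hA => mem_powerset.mp (hF hA)
  set a : ℕ → ℕ := fun c => (F.filter (fun A => A.card = c)).card with ha
  -- fiberwise count
  have hsum : F.card = ∑ c ∈ range (n - k + 1), a c := by
    refine card_eq_sum_card_fiberwise (fun A hA => ?_)
    rw [mem_coe, mem_range]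
    exact Nat.lt_succ_of_le (hsize A hA)
  -- level 0
  have h0 : a 0 ≤ 1 := by
    refine le_trans (card_le_card ?_) (card_singleton (∅ : Finset α)).le
    intro A hA
    simp only [mem_filter, card_eq_zero] at hA
    simp [hA.2]
  -- small levels via EKR
  have hsmall : ∀ c, 1 ≤ c → c ≤ k - 1 → c ≤ n - k → a c ≤ (n - 1).choose (c - 1) := by
    intro c hc1 hck hcnk
    refine ekr_ground X hX (by omega) _ (fun A hA => hsubX A (mem_filter.mp hA).1)
      (fun A hA => (mem_filter.mp hA).2) ?_
    intro A hA B hB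
    rw [mem_filter] at hA hB
    exact hint A hA.1 B hB.1 (card_pos.mp (by omega)) (card_pos.mp (by omega))
  -- pairing bound for middle levels
  have hpair : ∀ c, k ≤ c → c ≤ n - k → a c + a (n - c) ≤ n.choose c := by
    intro c hkc hcm
    set P := F.filter (fun A => A.card = c) with hP
    set Q := F.filter (fun A => A.card = n - c) with hQ
    have hQinj : Set.InjOn (fun B => X \ B) Q := by
      intro B hB B' hB' h
      have hBX := hsubX B (mem_filter.mp hB).1
      have hB'X := hsubX B' (mem_filter.mp hB').1
      have h' : X \ B = X \ B' := h
      rw [← Finset.sdiff_sdiff_eq_self hBX, ← Finset.sdiff_sdiff_eq_self hB'X, h']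
    have hdisj : Disjoint P (Q.image (fun B => X \ B)) := by
      rw [disjoint_left]
      intro A hAP hAQ
      obtain ⟨B, hBQ, rfl⟩ := mem_image.mp hAQ
      rw [mem_filter] at hAP hBQ
      refine hint _ hAP.1 _ hBQ.1 (card_pos.mp (by omega)) (card_pos.mp (by omega)) ?_
      exact sdiff_disjoint
    have hsub : P ∪ Q.image (fun B => X \ B) ⊆ X.powersetCard c := by
      intro A hA
      rw [mem_union] at hA
      rw [mem_powersetCard]
      rcases hA with hA | hA
      · rw [mem_filter] at hA
        exact ⟨hsubX A hA.1, hA.2⟩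
      · obtain ⟨B, hBQ, rfl⟩ := mem_image.mp hA
        rw [mem_filter] at hBQ
        refine ⟨sdiff_subset, ?_⟩
        rw [card_sdiff_of_subset (hsubX B hBQ.1), hX, hBQ.2]
        omega
    calc a c + a (n - c) = P.card + (Q.image (fun B => X \ B)).card := by
          rw [card_image_of_injOn hQinj]
      _ = (P ∪ Q.image (fun B => X \ B)).card := (card_union_of_disjoint hdisj).symm
      _ ≤ (X.powersetCard c).card := card_le_card hsub
      _ = n.choose c := by rw [card_powersetCard, hX]
  -- middle levels sum bound
  have hmid : ∑ c ∈ Icc k (n - k), a c ≤ ∑ c ∈ Icc k (n - k), (n - 1).choose (c - 1) := by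
    rcases le_or_gt k (n - k) with hkm | hkm
    · have hrefl : ∑ c ∈ Icc k (n - k), a (n - c) = ∑ c ∈ Icc k (n - k), a c := by
        refine Finset.sum_nbij' (fun c => n - c) (fun c => n - c) ?_ ?_ ?_ ?_ ?_ <;>
            intro x hx <;> simp only [mem_Icc] at hx
        · simp only [mem_Icc]; omega
        · simp only [mem_Icc]; omega
        · omega
        · omega
        · rfl
      have hsum2 : 2 * ∑ c ∈ Icc k (n - k), a c ≤ ∑ c ∈ Icc k (n - k), n.choose c := by
        rw [two_mul]
        nth_rewrite 2 [← hrefl]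
        rw [← Finset.sum_add_distrib]
        refine Finset.sum_le_sum ?_
        intro c hc
        rw [mem_Icc] at hc
        exact hpair c hc.1 hc.2
      have hch : ∑ c ∈ Icc k (n - k), n.choose c
          = 2 * ∑ c ∈ Icc k (n - k), (n - 1).choose (c - 1) := by
        have e1 : ∑ c ∈ Icc k (n - k), n.choose c
            = ∑ c ∈ Icc k (n - k), ((n - 1).choose (c - 1) + (n - 1).choose c) := by
          refine Finset.sum_congr rfl fun c hc => ?_
          rw [mem_Icc] at hc
          exact pascal_split (by omega) (by omega)
        have e2 : ∑ c ∈ Icc k (n - k), (n - 1).choose c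
            = ∑ c ∈ Icc k (n - k), (n - 1).choose (c - 1) := by
          refine Finset.sum_nbij' (fun c => n - c) (fun c => n - c) ?_ ?_ ?_ ?_ ?_ <;>
              intro x hx <;> simp only [mem_Icc] at hx
          · simp only [mem_Icc]; omega
          · simp only [mem_Icc]; omega
          · omega
          · omega
          · have hx' : n - x - 1 = n - 1 - x := by omega
            rw [hx', Nat.choose_symm (by omega)]
        rw [e1, Finset.sum_add_distrib, e2, two_mul]
      omega
    · have : Icc k (n - k) = ∅ := by
        rw [Icc_eq_empty_iff]
        omega
      simp [this]
  -- total sum bound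
  have hbound : F.card ≤ 1 + ∑ c ∈ Ico 1 (n - k + 1), (n - 1).choose (c - 1) := by
    rw [hsum, range_eq_Ico, ← Finset.sum_Ico_consecutive _ (Nat.zero_le 1) (by omega : 1 ≤ n - k + 1)]
    have hIco0 : ∑ c ∈ Ico 0 1, a c = a 0 := by simp
    rw [hIco0]
    refine Nat.add_le_add h0 ?_
    rcases le_or_gt k (n - k) with hkm | hkm
    · rw [← Finset.sum_Ico_consecutive _ (by omega : 1 ≤ k) (by omega : k ≤ n - k + 1),
        ← Finset.sum_Ico_consecutive (fun c => (n - 1).choose (c - 1)) (by omega : 1 ≤ k)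
          (by omega : k ≤ n - k + 1)]
      refine Nat.add_le_add ?_ ?_
      · refine Finset.sum_le_sum fun c hc => ?_
        rw [mem_Ico] at hc
        exact hsmall c hc.1 (by omega) (by omega)
      · have : Ico k (n - k + 1) = Icc k (n - k) := rfl
        rw [this]
        exact hmid
    · refine Finset.sum_le_sum fun c hc => ?_
      rw [mem_Ico] at hc
      exact hsmall c hc.1 (by omega) (by omega)
  have := final_arith n k hk hkn
  omega
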